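/- Bracketings are uniquely determined by their right depth sequences: if two bracketings of the same size n have the same right depth sequence (d_1,…,d_n), then they are equal. (Paper's Proposition 2.8.) -/

import Mathlib

/-- A bracketing of size `n`: a full binary tree with `n` leaves. -/
inductive Bracketing : ℕ → Type
  | leaf : Bracketing 1
  | node : {k l : ℕ} → Bracketing k → Bracketing l → Bracketing (k + l)

/-- The `n`-ary regular operation induced by a bracketing on a magma `(G, op)`. -/
def Bracketing.eval {G : Type*} (op : G → G → G) : {n : ℕ} → Bracketing n → (Fin n → G) → G
  | _, .leaf, v => v 0
  | _, .node P Q, v =>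
      op (Bracketing.eval op P (fun i => v (Fin.castAdd _ i)))
         (Bracketing.eval op Q (fun i => v (Fin.natAdd _ i)))

/-- The associative spectrum: the number of distinct `n`-ary regular operations. -/
noncomputable def assocSpectrum {G : Type*} (op : G → G → G) (n : ℕ) : ℕ :=
  Nat.card {f : (Fin n → G) → G // ∃ B : Bracketing n, f = Bracketing.eval op B}

/-- The depth of the `i`-th leaf of a bracketing. -/
def Bracketing.depth : {n : ℕ} → Bracketing n → Fin n → ℕ
  | _, .leaf, _ => 0
  | _, .node (k := k) P Q, i =>
      if h : (i : ℕ) < k then Bracketing.depth P ⟨i, h⟩ + 1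
      else Bracketing.depth Q ⟨(i : ℕ) - k, by have := i.isLt; omega⟩ + 1

/-- The right depth of the `i`-th leaf of a bracketing. -/
def Bracketing.rdepth : {n : ℕ} → Bracketing n → Fin n → ℕ
  | _, .leaf, _ => 0
  | _, .node (k := k) P Q, i =>
      if h : (i : ℕ) < k then Bracketing.rdepth P ⟨i, h⟩
      else Bracketing.rdepth Q ⟨(i : ℕ) - k, by have := i.isLt; omega⟩ + 1

/-- The left depth of the `i`-th leaf of a bracketing. -/
def Bracketing.ldepth : {n : ℕ} → Bracketing n → Fin n → ℕ
  | _, .leaf, _ => 0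
  | _, .node (k := k) P Q, i =>
      if h : (i : ℕ) < k then Bracketing.ldepth P ⟨i, h⟩ + 1
      else Bracketing.ldepth Q ⟨(i : ℕ) - k, by have := i.isLt; omega⟩

/-- A magma operation is Catalan if distinct bracketings of equal size
    induce distinct regular operations. -/
def IsCatalanOp {G : Type*} (op : G → G → G) : Prop :=
  ∀ (n : ℕ) (B₁ B₂ : Bracketing n), B₁ ≠ B₂ →
    Bracketing.eval op B₁ ≠ Bracketing.eval op B₂

/-- Plain (unindexed) full binary trees. -/
inductive PT : Type
  | leaf : PT
  | node : PT → PT → PT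

namespace PT

def size : PT → ℕ
  | leaf => 1
  | node p q => p.size + q.size

lemma size_pos (t : PT) : 1 ≤ t.size := by
  induction t with
  | leaf => simp [size]
  | node p q hp hq => simp [size]; omega

/-- The list of right depths of the leaves. -/
def rlist : PT → List ℕ
  | leaf => [0]
  | node p q => p.rlist ++ q.rlist.map (· + 1)

lemma length_rlist (t : PT) : t.rlist.length = t.size := by
  induction t with
  | leaf => simp [rlist, size]
  | node p q hp hq => simp [rlist, size, hp, hq]

lemma rlist_ne_nil (t : PT) : t.rlist ≠ [] := by
  have h1 := t.size_pos
  have h2 := t.length_rlist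
  intro h; rw [h] at h2; simp at h2; omega

lemma rlist_head (t : PT) (h : 0 < t.rlist.length) : t.rlist[0] = 0 := by
  induction t with
  | leaf => simp [rlist]
  | node p q hp hq =>
      have hlp : 0 < p.rlist.length := by
        have := p.size_pos; have := p.length_rlist; omega
      have : (p.rlist ++ q.rlist.map (· + 1))[0] = p.rlist[0] :=
        List.getElem_append_left hlp
      exact this.trans (hp hlp)

lemma rlist_pos (t : PT) (j : ℕ) (hj : 0 < j) (hjl : j < t.rlist.length) :
    1 ≤ t.rlist[j] := by
  induction t generalizing j with
  | leaf => simp [rlist] at hjl; omega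
  | node p q hp hq =>
      rcases lt_or_ge j p.rlist.length with hc | hc
      · have : (p.rlist ++ q.rlist.map (· + 1))[j] = p.rlist[j] :=
          List.getElem_append_left hc
        exact this ▸ hp j hj hc
      · simp only [rlist] at hjl ⊢
        rw [List.getElem_append_right hc]
        simp

lemma rlist_inj (t₁ t₂ : PT) (h : t₁.rlist = t₂.rlist) : t₁ = t₂ := by
  induction t₁ generalizing t₂ with
  | leaf =>
      cases t₂ with
      | leaf => rfl
      | node p q =>
          exfalso
          have h1 := congrArg List.length h
          simp [rlist] at h1
          have := p.size_pos; have := q.size_pos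
          have := p.length_rlist; have := q.length_rlist
          omega
  | node p₁ q₁ hp hq =>
      cases t₂ with
      | leaf =>
          exfalso
          have h1 := congrArg List.length h
          simp [rlist] at h1
          have := p₁.size_pos; have := q₁.size_pos
          have := p₁.length_rlist; have := q₁.length_rlist
          omega
      | node p₂ q₂ =>
          simp only [rlist] at h
          -- key: the split points agree, i.e. p₁.rlist.length = p₂.rlist.length
          have key : ∀ (a₁ b₁ a₂ b₂ : PT),
              a₁.rlist ++ b₁.rlist.map (· + 1) = a₂.rlist ++ b₂.rlist.map (· + 1) →
              a₁.rlist.length ≤ a₂.rlist.length := by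
            intro a₁ b₁ a₂ b₂ hh
            by_contra hlt
            push_neg at hlt
            -- consider index m = a₁.rlist.length, the first leaf of b₁ on the left side
            have hb₁ : 0 < b₁.rlist.length := by
              have := b₁.size_pos; have := b₁.length_rlist; omega
            have hb₂ : 0 < b₂.rlist.length := by
              have := b₂.size_pos; have := b₂.length_rlist; omega
            have hlen : a₁.rlist.length + b₁.rlist.length
                = a₂.rlist.length + b₂.rlist.length := by
              have := congrArg List.length hh; simpa using this
            have hmlen : a₁.rlist.length <
                (a₁.rlist ++ b₁.rlist.map (· + 1)).length := by simp; omega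
            have hv1 : (a₁.rlist ++ b₁.rlist.map (· + 1))[a₁.rlist.length] = 1 := by
              rw [List.getElem_append_right (le_refl _)]
              simp [b₁.rlist_head hb₁]
            have hv2 : (a₂.rlist ++ b₂.rlist.map (· + 1))[a₁.rlist.length]'(by
                simp; omega) = b₂.rlist[a₁.rlist.length - a₂.rlist.length]'(by
                  have := b₂.length_rlist; omega) + 1 := by
              rw [List.getElem_append_right (by omega)]
              simp
            have hge : 1 ≤ b₂.rlist[a₁.rlist.length - a₂.rlist.length]'(by
                have := b₂.length_rlist; omega) :=
              b₂.rlist_pos _ (by omega) (by omega)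
            rw [List.getElem_of_eq hh, hv2] at hv1
            omega
          have hle₁ := key p₁ q₁ p₂ q₂ h
          have hle₂ := key p₂ q₂ p₁ q₁ h.symm
          have hlen : p₁.rlist.length = p₂.rlist.length := le_antisymm hle₁ hle₂
          have hpe : p₁.rlist = p₂.rlist ∧
              q₁.rlist.map (· + 1) = q₂.rlist.map (· + 1) :=
            List.append_inj h hlen
          have hq' : q₁.rlist = q₂.rlist := by
            have := hpe.2
            exact List.map_injective_iff.mpr (fun a b => by omega) this
          rw [hp p₂ hpe.1, hq q₂ hq']

end PT

/-- Forget the size index. -/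
def Bracketing.toPT : {n : ℕ} → Bracketing n → PT
  | _, .leaf => .leaf
  | _, .node P Q => .node P.toPT Q.toPT

lemma Bracketing.size_toPT : ∀ {n : ℕ} (B : Bracketing n), B.toPT.size = n
  | _, .leaf => rfl
  | _, .node P Q => by simp [toPT, PT.size, size_toPT P, size_toPT Q]

lemma Bracketing.rlist_toPT : ∀ {n : ℕ} (B : Bracketing n),
    B.toPT.rlist = List.ofFn B.rdepth
  | _, .leaf => by
      simp [toPT, PT.rlist, List.ofFn_succ, rdepth]
  | _, .node (k := k) (l := l) P Q => by
      have hP := rlist_toPT P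
      have hQ := rlist_toPT Q
      simp only [toPT, PT.rlist, hP, hQ]
      rw [List.ofFn_add]
      congr 1
      · refine congrArg List.ofFn (funext fun i => ?_)
        simp [rdepth, Fin.castAdd]
      · rw [List.map_ofFn]
        refine congrArg List.ofFn (funext fun i => ?_)
        simp [rdepth, Fin.natAdd, Function.comp]

lemma Bracketing.toPT_inj : ∀ {m : ℕ} (B₁ : Bracketing m) {n : ℕ} (B₂ : Bracketing n),
    B₁.toPT = B₂.toPT → HEq B₁ B₂ := by
  intro m B₁
  induction B₁ with
  | leaf =>
      intro n B₂ h
      cases B₂ with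
      | leaf => rfl
      | node P Q => simp [toPT] at h
  | node P₁ Q₁ ihP ihQ =>
      intro n B₂ h
      cases B₂ with
      | leaf => simp [toPT] at h
      | node P₂ Q₂ =>
          simp only [toPT, PT.node.injEq] at h
          have hk : _ = _ := (size_toPT P₁).symm.trans (h.1 ▸ size_toPT P₂)
          have hl : _ = _ := (size_toPT Q₁).symm.trans (h.2 ▸ size_toPT Q₂)
          subst hk; subst hl
          have e1 : P₁ = P₂ := eq_of_heq (ihP P₂ h.1)
          have e2 : Q₁ = Q₂ := eq_of_heq (ihQ Q₂ h.2)
          rw [e1, e2]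

/-- Paper's Proposition 2.8: bracketings are uniquely determined by their right depth
sequences. -/
theorem stmt5 {n : ℕ} (B₁ B₂ : Bracketing n) (h : B₁.rdepth = B₂.rdepth) : B₁ = B₂ := by
  have hl : B₁.toPT.rlist = B₂.toPT.rlist := by
    rw [Bracketing.rlist_toPT, Bracketing.rlist_toPT, h]
  exact eq_of_heq (Bracketing.toPT_inj B₁ B₂ (PT.rlist_inj _ _ hl))
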